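/- Let H₁ = [[f₁,u₁],[g₁,v₁]] and H₂ = [[f₂,u₂],[g₂,v₂]] with all entries in L^∞. If R_{H₁}R_{H₂} = R_{H₂}R_{H₁} and f₁ = v₁, f₂ = v₂, then the operator W = ( V((conj(f₁))₋), (g₁)₋ ) ⊗ ( V((f₂)₋), (conj(u₂))₋ ) − ( V((conj(u₁))₋), (f₁)₋ ) ⊗ ( V((g₂)₋), (conj(f₂))₋ ) on L² ⊕ L² cannot be a rank-one operator. -/

import Mathlib

noncomputable section

open MeasureTheory Complex ComplexConjugate InnerProductSpace ContinuousLinearMap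

namespace GSIO

instance : Fact (0 < 2 * Real.pi) := ⟨by positivity⟩

/-- The circle, modeled as `ℝ / 2πℤ`. -/
abbrev Circ : Type := AddCircle (2 * Real.pi)

/-- Normalized Haar (arc-length) measure on the circle. -/
abbrev μC : Measure Circ := AddCircle.haarAddCircle

/-- `L²` of the circle. -/
abbrev L2 : Type := Lp ℂ 2 μC

/-- `L^∞` of the circle. -/
abbrev Linf : Type := Lp ℂ ⊤ μC

/-- The Hardy space `H²`: those `L²` functions whose negative Fourier coefficients vanish. -/
def Hardy : Submodule ℂ L2 where
  carrier := {f : L2 | ∀ n : ℤ, n < 0 → fourierCoeff (f : Circ → ℂ) n = 0}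
  zero_mem' := by
    intro n hn
    rw [← fourierBasis_repr]
    simp
  add_mem' := by
    intro a b ha hb n hn
    have ha' := ha n hn
    have hb' := hb n hn
    rw [← fourierBasis_repr] at ha' hb' ⊢
    rw [map_add, lp.coeFn_add, Pi.add_apply, ha', hb', add_zero]
  smul_mem' := by
    intro c a ha n hn
    have ha' := ha n hn
    rw [← fourierBasis_repr] at ha' ⊢
    rw [_root_.map_smul, lp.coeFn_smul, Pi.smul_apply, ha', smul_zero]

theorem isClosed_Hardy : IsClosed (Hardy : Set L2) := by
  have h : (Hardy : Set L2) =
      ⋂ n : {m : ℤ // m < 0}, (fun f : L2 =>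
        (innerSL ℂ (fourierBasis (T := 2 * Real.pi) n.1)) f) ⁻¹' {0} := by
    ext f
    simp only [Set.mem_iInter, Set.mem_preimage, Set.mem_singleton_iff, SetLike.mem_coe]
    constructor
    · intro hf n
      have h1 := hf n.1 n.2
      rw [← fourierBasis_repr, fourierBasis.repr_apply_apply] at h1
      simpa using h1
    · intro hf n hn
      have h1 := hf ⟨n, hn⟩
      rw [← fourierBasis_repr, fourierBasis.repr_apply_apply]
      simpa using h1
  rw [h]
  exact isClosed_iInter fun n =>
    isClosed_singleton.preimage (innerSL ℂ _).continuous

instance : CompleteSpace Hardy := isClosed_Hardy.completeSpace_coe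

/-- The Riesz projection `P₊`, i.e. the orthogonal projection of `L²` onto `H²`. -/
def Pp : L2 →L[ℂ] L2 := Hardy.subtypeL.comp (Hardy.orthogonalProjectionOnto)

/-- `P₋ = I − P₊`. -/
def Pm : L2 →L[ℂ] L2 := ContinuousLinearMap.id ℂ L2 - Pp

/-- The pointwise product of an `L^∞` function with an `L²` function, as an `L²` function. -/
def mulFun (φ : Linf) (x : L2) : L2 :=
  ((Lp.memLp x).smul (Lp.memLp φ)).toLp ((φ : Circ → ℂ) • (x : Circ → ℂ))

theorem mulFun_add (φ : Linf) (x y : L2) : mulFun φ (x + y) = mulFun φ x + mulFun φ y := by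
  rw [mulFun, mulFun, mulFun, ← MemLp.toLp_add]
  apply MemLp.toLp_congr
  filter_upwards [Lp.coeFn_add x y] with t ht
  have ht' : ((x + y : L2) : Circ → ℂ) t = (x : Circ → ℂ) t + (y : Circ → ℂ) t := by
    simpa using ht
  simp only [Pi.mul_apply, Pi.smul_apply, Pi.add_apply, smul_eq_mul, ht']
  ring

theorem mulFun_smul (c : ℂ) (φ : Linf) (x : L2) : mulFun φ (c • x) = c • mulFun φ x := by
  rw [mulFun, mulFun, ← MemLp.toLp_const_smul]
  apply MemLp.toLp_congr
  filter_upwards [Lp.coeFn_smul c x] with t ht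
  have ht' : ((c • x : L2) : Circ → ℂ) t = c * (x : Circ → ℂ) t := by
    simpa using ht
  simp only [Pi.mul_apply, Pi.smul_apply, smul_eq_mul, ht']
  ring

theorem norm_mulFun_le (φ : Linf) (x : L2) : ‖mulFun φ x‖ ≤ ‖φ‖ * ‖x‖ := by
  rw [mulFun, Lp.norm_toLp]
  have h := eLpNorm_smul_le_eLpNorm_top_mul_eLpNorm (μ := μC) 2
    (Lp.aestronglyMeasurable x) (φ : Circ → ℂ)
  refine le_trans (ENNReal.toReal_mono ?_ h) ?_
  · exact ENNReal.mul_ne_top (Lp.eLpNorm_ne_top φ) (Lp.eLpNorm_ne_top x)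
  · rw [ENNReal.toReal_mul, Lp.norm_def, Lp.norm_def]

/-- The multiplication operator `M_φ` on `L²`, for `φ ∈ L^∞`. -/
def mul (φ : Linf) : L2 →L[ℂ] L2 :=
  LinearMap.mkContinuous
    { toFun := mulFun φ
      map_add' := mulFun_add φ
      map_smul' := fun c x => mulFun_smul c φ x }
    ‖φ‖ (fun x => norm_mulFun_le φ x)

/-- Pointwise product in `L^∞`. -/
def mulInf (φ ψ : Linf) : Linf :=
  ((Lp.memLp ψ).smul (Lp.memLp φ)).toLp ((φ : Circ → ℂ) • (ψ : Circ → ℂ))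

/-- Complex conjugation on `L^∞`. -/
def conjInf (φ : Linf) : Linf :=
  (show MemLp (fun t => star ((φ : Circ → ℂ) t)) ⊤ μC from
    ⟨continuous_star.comp_aestronglyMeasurable (Lp.aestronglyMeasurable φ), by
      rw [eLpNorm_congr_norm_ae (g := (φ : Circ → ℂ))
        (Filter.Eventually.of_forall fun t => norm_star _)]
      exact Lp.eLpNorm_lt_top φ⟩).toLp _

/-- Complex conjugation on `L²`. -/
def conjL2 (x : L2) : L2 :=
  (show MemLp (fun t => star ((x : Circ → ℂ) t)) 2 μC from
    ⟨continuous_star.comp_aestronglyMeasurable (Lp.aestronglyMeasurable x), by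
      rw [eLpNorm_congr_norm_ae (g := (x : Circ → ℂ))
        (Filter.Eventually.of_forall fun t => norm_star _)]
      exact Lp.eLpNorm_lt_top x⟩).toLp _

/-- The inclusion `L^∞ ⊆ L²` (the measure is finite). -/
def toL2 (φ : Linf) : L2 := ((Lp.memLp φ).mono_exponent le_top).toLp φ

/-- The constant function `c` as an element of `L^∞`. -/
def constInf (c : ℂ) : Linf := (memLp_const c).toLp (fun _ => c)

/-- An `L^∞` function is constant (a.e.). -/
def IsConst (φ : Linf) : Prop := ∃ c : ℂ, φ = constInf c

/-- `φ ∈ H^∞ = L^∞ ∩ H²`: the negative Fourier coefficients of `φ` vanish. -/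
def MemHinf (φ : Linf) : Prop := ∀ n : ℤ, n < 0 → fourierCoeff (φ : Circ → ℂ) n = 0

/-- The coordinate function `z` as an element of `L^∞`. -/
def zInf : Linf := fourierLp (T := 2 * Real.pi) ⊤ 1

/-- The function `z̄` as an element of `L^∞`. -/
def zbarInf : Linf := fourierLp (T := 2 * Real.pi) ⊤ (-1)

/-- The antiunitary operator `V : h ↦ z̄ ⬝ conj h` on `L²`. -/
def Vmap (x : L2) : L2 := mul zbarInf (conjL2 x)

/-- `φ₋ = P₋ φ` for `φ ∈ L^∞`, viewed inside `L²`. -/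
def mI (φ : Linf) : L2 := Pm (toL2 φ)

/-- The rank-one operator `p ⊗ q : x ↦ ⟪x, q⟫ · p` (the inner product being conjugate-linear
in `q`). -/
def rankOne {E : Type*} [NormedAddCommGroup E] [InnerProductSpace ℂ E] (p q : E) : E →L[ℂ] E :=
  (innerSL ℂ q).smulRight p

/-- The Hilbert space direct sum `L² ⊕ L²`. -/
abbrev L2sq : Type := WithLp 2 (L2 × L2)

/-- A pair of `L²` functions, viewed as a vector in `L² ⊕ L²`. -/
def pair (x y : L2) : L2sq := (WithLp.equiv 2 (L2 × L2)).symm (x, y)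

/-- Notation for the pointwise product in `L^∞`. -/
scoped infixl:70 " ⊙ " => GSIO.mulInf

/-- The Toeplitz operator `T_φ = P₊ M_φ P₊` (viewed as acting on the corner `H²` of `L²`). -/
def Toeplitz (φ : Linf) : L2 →L[ℂ] L2 := Pp ∘L mul φ ∘L Pp

/-- The Hankel operator `H_φ = P₋ M_φ P₊ : H² → (H²)^⊥` (as a corner operator on `L²`). -/
def Hankel (φ : Linf) : L2 →L[ℂ] L2 := Pm ∘L mul φ ∘L Pp

/-- The dual Toeplitz operator `T̃_φ = P₋ M_φ P₋` on `(H²)^⊥` (as a corner operator on `L²`). -/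
def dualToeplitz (φ : Linf) : L2 →L[ℂ] L2 := Pm ∘L mul φ ∘L Pm

/-- The generalized Cauchy singular integral operator with symbol `[[f, u], [g, v]]`:
`R x = P₊ f P₊ x + P₋ g P₊ x + P₊ u P₋ x + P₋ v P₋ x`. -/
def Rop (f u g v : Linf) : L2 →L[ℂ] L2 :=
  Pp ∘L mul f ∘L Pp + Pm ∘L mul g ∘L Pp + Pp ∘L mul u ∘L Pm + Pm ∘L mul v ∘L Pm

/-- The singular integral operator `S_{f,g} = M_f P₊ + M_g P₋` on `L²`. -/
def Sop (f g : Linf) : L2 →L[ℂ] L2 := mul f ∘L Pp + mul g ∘L Pm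



/-- Negation `t ↦ -t` preserves the Haar measure of the circle. -/
theorem mp_neg : MeasurePreserving (fun t : Circ => -t) μC μC :=
  Measure.measurePreserving_neg μC

/-- Composition with `t ↦ -t` on `L²`. -/
def reflL2 : L2 →L[ℂ] L2 :=
  (Lp.compMeasurePreservingₗᵢ ℂ (fun t : Circ => -t) mp_neg).toContinuousLinearMap

/-- Composition with `t ↦ -t` on `L^∞`: for `φ ∈ L^∞`, `φ̃(z) = φ(z̄)`. -/
def reflInf (φ : Linf) : Linf := Lp.compMeasurePreserving (fun t : Circ => -t) mp_neg φ

/-- `φ* (z) = conj (φ(z̄))`. -/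
def starInf (φ : Linf) : Linf := conjInf (reflInf φ)

/-- The flip operator `J : (Jh)(z) = z̄ · h(z̄)` on `L²`. -/
def Jop : L2 →L[ℂ] L2 := mul zbarInf ∘L reflL2

/-- The Hankel operator `𝕳_φ = P₊ M_φ J` on `H²` (as a corner operator on `L²`). -/
def HankelPlus (φ : Linf) : L2 →L[ℂ] L2 := Pp ∘L mul φ ∘L Jop ∘L Pp

/-- The adjoint `H*_φ` of the Hankel operator `H_φ`. -/
def HankelAdj (φ : Linf) : L2 →L[ℂ] L2 := ContinuousLinearMap.adjoint (Hankel φ)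

/-- `θ ∈ L^∞` is an inner function: `θ ∈ H^∞` and `|θ| = 1` a.e. -/
def IsInner (θ : Linf) : Prop := MemHinf θ ∧ ∀ᵐ t ∂μC, ‖(θ : Circ → ℂ) t‖ = 1

/-- The orthogonal projection of `L²` onto `K_θ^⊥ = θH² ⊕ z̄·conj(H²)`, namely
`P₋ + M_θ P₊ M_{conj θ}`. -/
def Qproj (θ : Linf) : L2 →L[ℂ] L2 := Pm + mul θ ∘L Pp ∘L mul (conjInf θ)

local notation "⟪" x ", " y "⟫" => @inner ℂ _ _ x y

/-- Fourier basis vectors of `L2`. -/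
def E (n : ℤ) : L2 := fourierBasis (T := 2 * Real.pi) n

lemma inner_E (n : ℤ) (x : L2) : ⟪E n, x⟫ = fourierCoeff (x : Circ → ℂ) n := by
  rw [← fourierBasis_repr]
  exact (fourierBasis.repr_apply_apply x n).symm

lemma E_coeFn (n : ℤ) : (E n : Circ → ℂ) =ᵐ[μC] fourier n := by
  have : E n = fourierLp (T := 2 * Real.pi) 2 n := by
    rw [E, ← coe_fourierBasis]
  rw [this]
  exact coeFn_fourierLp 2 n

lemma inner_E_E (m n : ℤ) : ⟪E m, E n⟫ = if m = n then 1 else 0 :=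
  orthonormal_iff_ite.mp fourierBasis.orthonormal m n

lemma fourierCoeff_congr_ae {f g : Circ → ℂ} (h : f =ᵐ[μC] g) (n : ℤ) :
    fourierCoeff f n = fourierCoeff g n := by
  unfold fourierCoeff
  apply integral_congr_ae
  filter_upwards [h] with t ht
  simp only [ht]

lemma coeFn_mul (φ : Linf) (x : L2) :
    (mul φ x : Circ → ℂ) =ᵐ[μC] fun t => (φ : Circ → ℂ) t * (x : Circ → ℂ) t := by
  have : mul φ x = mulFun φ x := rfl
  rw [this, mulFun]
  exact (MemLp.coeFn_toLp _).trans (Filter.Eventually.of_forall fun t => rfl)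

lemma coeFn_conjL2 (x : L2) :
    (conjL2 x : Circ → ℂ) =ᵐ[μC] fun t => conj ((x : Circ → ℂ) t) := by
  rw [conjL2]; exact MemLp.coeFn_toLp _

lemma coeFn_conjInf (φ : Linf) :
    (conjInf φ : Circ → ℂ) =ᵐ[μC] fun t => conj ((φ : Circ → ℂ) t) := by
  rw [conjInf]; exact MemLp.coeFn_toLp _

lemma coeFn_toL2 (φ : Linf) : (toL2 φ : Circ → ℂ) =ᵐ[μC] (φ : Circ → ℂ) := by
  rw [toL2]; exact MemLp.coeFn_toLp _

lemma coeFn_zbarInf : (zbarInf : Circ → ℂ) =ᵐ[μC] fourier (-1) := coeFn_fourierLp ⊤ (-1)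

lemma coeFn_Vmap (x : L2) :
    (Vmap x : Circ → ℂ) =ᵐ[μC] fun t => fourier (-1) t * conj ((x : Circ → ℂ) t) := by
  rw [Vmap]
  filter_upwards [coeFn_mul zbarInf (conjL2 x), coeFn_zbarInf, coeFn_conjL2 x] with t h1 h2 h3
  rw [h1, h2, h3]

/-- Shorthand for the Fourier coefficients of an `L^∞` symbol. -/
def sc (φ : Linf) (k : ℤ) : ℂ := fourierCoeff ((φ : Circ → ℂ)) k

lemma fourierCoeff_conj (f : Circ → ℂ) (n : ℤ) :
    fourierCoeff (fun t => conj (f t)) n = conj (fourierCoeff f (-n)) := by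
  unfold fourierCoeff
  rw [← integral_conj]
  apply integral_congr_ae
  apply Filter.Eventually.of_forall
  intro t
  simp only [smul_eq_mul, map_mul, neg_neg, ← fourier_neg]

lemma sc_conjInf (φ : Linf) (k : ℤ) : sc (conjInf φ) k = conj (sc φ (-k)) := by
  unfold sc
  rw [fourierCoeff_congr_ae (coeFn_conjInf φ), fourierCoeff_conj]

lemma inner_E_mul_E (φ : Linf) (m n : ℤ) : ⟪E m, mul φ (E n)⟫ = sc φ (m - n) := by
  rw [inner_E]
  rw [fourierCoeff_congr_ae (coeFn_mul φ (E n))]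
  have h2 : fourierCoeff (fun t => (φ : Circ → ℂ) t * (E n : Circ → ℂ) t) m
      = fourierCoeff (fun t => fourier n t * (φ : Circ → ℂ) t) m := by
    apply fourierCoeff_congr_ae
    filter_upwards [E_coeFn n] with t ht
    rw [ht]; ring
  rw [h2]
  unfold fourierCoeff sc fourierCoeff
  apply integral_congr_ae
  apply Filter.Eventually.of_forall
  intro t
  simp only [smul_eq_mul, ← mul_assoc, ← fourier_add]
  congr 2
  ring
lemma inner_mul_left (φ : Linf) (a b : L2) :
    ⟪mul φ a, b⟫ = ⟪a, mul (conjInf φ) b⟫ := by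
  rw [MeasureTheory.L2.inner_def, MeasureTheory.L2.inner_def]
  apply integral_congr_ae
  filter_upwards [coeFn_mul φ a, coeFn_mul (conjInf φ) b, coeFn_conjInf φ] with t h1 h2 h3
  rw [h1, h2, h3]
  simp only [RCLike.inner_apply, map_mul, starRingEnd_self_apply]
  ring

lemma hasSum_inner_mul (a b : L2) :
    HasSum (fun k => conj ⟪E k, a⟫ * ⟪E k, b⟫) ⟪a, b⟫ := by
  have h := fourierBasis (T := 2 * Real.pi) |>.hasSum_inner_mul_inner a b
  have e : (fun k => conj ⟪E k, a⟫ * ⟪E k, b⟫)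
      = fun i => ⟪a, fourierBasis (T := 2 * Real.pi) i⟫ * ⟪fourierBasis (T := 2 * Real.pi) i, b⟫ := by
    funext k
    rw [inner_conj_symm]
    rfl
  rw [e]
  exact h

lemma hasSum_coeff_mul (φ : Linf) (w : L2) (m : ℤ) :
    HasSum (fun k => sc φ (m - k) * ⟪E k, w⟫) ⟪E m, mul φ w⟫ := by
  have key : ⟪E m, mul φ w⟫ = ⟪mul (conjInf φ) (E m), w⟫ := by
    rw [← inner_conj_symm, inner_mul_left, inner_conj_symm]
  rw [key]
  have h := hasSum_inner_mul (mul (conjInf φ) (E m)) w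
  convert h using 2 with k
  rw [inner_E_mul_E, sc_conjInf, Complex.conj_conj, neg_sub]

lemma E_mem_Hardy {n : ℤ} (hn : 0 ≤ n) : E n ∈ Hardy := by
  intro m hm
  have := inner_E m (E n)
  rw [inner_E_E] at this
  rw [← this, if_neg (by omega)]

lemma inner_E_Pp (m : ℤ) (x : L2) :
    ⟪E m, Pp x⟫ = if 0 ≤ m then ⟪E m, x⟫ else 0 := by
  split_ifs with h
  · have h0 : ⟪x - Pp x, E m⟫ = 0 :=
      Submodule.starProjection_inner_eq_zero (K := Hardy) x (E m) (E_mem_Hardy h)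
    have h1 : ⟪E m, x - Pp x⟫ = 0 := by rw [← inner_conj_symm, h0, map_zero]
    rw [inner_sub_right] at h1
    linear_combination -h1
  · have hmem : Pp x ∈ Hardy := (Hardy.orthogonalProjectionOnto x).2
    rw [inner_E]
    exact hmem m (by omega)

lemma inner_E_Pm (m : ℤ) (x : L2) :
    ⟪E m, Pm x⟫ = if m < 0 then ⟪E m, x⟫ else 0 := by
  have : Pm x = x - Pp x := by
    simp [Pm, ContinuousLinearMap.sub_apply]
  rw [this, inner_sub_right, inner_E_Pp]
  split_ifs with h1 h2 h2 <;> first | omega | ring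
/-- The matrix kernel of `Rop f u g f` in the Fourier basis. -/
def ker (f u g : Linf) (m k : ℤ) : ℂ :=
  if 0 ≤ m then (if 0 ≤ k then sc f (m - k) else sc u (m - k))
  else (if 0 ≤ k then sc g (m - k) else sc f (m - k))

lemma ker_pp (f u g : Linf) {m k : ℤ} (hm : 0 ≤ m) (hk : 0 ≤ k) :
    ker f u g m k = sc f (m - k) := by unfold ker; rw [if_pos hm, if_pos hk]
lemma ker_pn (f u g : Linf) {m k : ℤ} (hm : 0 ≤ m) (hk : ¬ 0 ≤ k) :
    ker f u g m k = sc u (m - k) := by unfold ker; rw [if_pos hm, if_neg hk]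
lemma ker_np (f u g : Linf) {m k : ℤ} (hm : ¬ 0 ≤ m) (hk : 0 ≤ k) :
    ker f u g m k = sc g (m - k) := by unfold ker; rw [if_neg hm, if_pos hk]
lemma ker_nn (f u g : Linf) {m k : ℤ} (hm : ¬ 0 ≤ m) (hk : ¬ 0 ≤ k) :
    ker f u g m k = sc f (m - k) := by unfold ker; rw [if_neg hm, if_neg hk]

lemma ker_shift (f u g : Linf) {m k : ℤ} (hm : m ≠ -1) (hk : k ≠ -1) :
    ker f u g (m + 1) (k + 1) = ker f u g m k := by
  have h3 : m + 1 - (k + 1) = m - k := by ring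
  unfold ker
  rw [h3]
  split_ifs <;> first | rfl | (exfalso; omega)

lemma hasSum_R (f u g : Linf) (x : L2) (m : ℤ) :
    HasSum (fun k => ker f u g m k * ⟪E k, x⟫) ⟪E m, Rop f u g f x⟫ := by
  have hR : (Rop f u g f) x
      = Pp (mul f (Pp x)) + Pm (mul g (Pp x)) + Pp (mul u (Pm x)) + Pm (mul f (Pm x)) := by
    simp [Rop, ContinuousLinearMap.add_apply, ContinuousLinearMap.comp_apply]
  rw [hR, inner_add_right, inner_add_right, inner_add_right, inner_E_Pp, inner_E_Pp,
    inner_E_Pm, inner_E_Pm]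
  have e1 : (fun k => sc f (m - k) * ⟪E k, Pp x⟫)
      = fun k => if 0 ≤ k then sc f (m - k) * ⟪E k, x⟫ else 0 := by
    funext k; rw [inner_E_Pp]; split_ifs <;> simp
  have e2 : (fun k => sc u (m - k) * ⟪E k, Pm x⟫)
      = fun k => if 0 ≤ k then 0 else sc u (m - k) * ⟪E k, x⟫ := by
    funext k; rw [inner_E_Pm]; split_ifs with h1 h2 h2 <;> first | omega | simp
  have e3 : (fun k => sc g (m - k) * ⟪E k, Pp x⟫)
      = fun k => if 0 ≤ k then sc g (m - k) * ⟪E k, x⟫ else 0 := by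
    funext k; rw [inner_E_Pp]; split_ifs <;> simp
  have e4 : (fun k => sc f (m - k) * ⟪E k, Pm x⟫)
      = fun k => if 0 ≤ k then 0 else sc f (m - k) * ⟪E k, x⟫ := by
    funext k; rw [inner_E_Pm]; split_ifs with h1 h2 h2 <;> first | omega | simp
  by_cases hm : 0 ≤ m
  · rw [if_pos hm, if_pos hm, if_neg (by omega), if_neg (by omega)]
    have h1 := hasSum_coeff_mul f (Pp x) m
    have h2 := hasSum_coeff_mul u (Pm x) m
    rw [e1] at h1; rw [e2] at h2
    have h := h1.add h2
    have efun : (fun k => (if 0 ≤ k then sc f (m - k) * ⟪E k, x⟫ else 0)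
        + (if 0 ≤ k then 0 else sc u (m - k) * ⟪E k, x⟫))
        = fun k => ker f u g m k * ⟪E k, x⟫ := by
      funext k
      by_cases hk : 0 ≤ k
      · rw [if_pos hk, if_pos hk, ker_pp f u g hm hk, add_zero]
      · rw [if_neg hk, if_neg hk, ker_pn f u g hm hk, zero_add]
    rw [efun] at h
    convert h using 1
    ring
  · rw [if_neg hm, if_neg hm, if_pos (by omega), if_pos (by omega)]
    have h1 := hasSum_coeff_mul g (Pp x) m
    have h2 := hasSum_coeff_mul f (Pm x) m
    rw [e3] at h1; rw [e4] at h2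
    have h := h1.add h2
    have efun : (fun k => (if 0 ≤ k then sc g (m - k) * ⟪E k, x⟫ else 0)
        + (if 0 ≤ k then 0 else sc f (m - k) * ⟪E k, x⟫))
        = fun k => ker f u g m k * ⟪E k, x⟫ := by
      funext k
      by_cases hk : 0 ≤ k
      · rw [if_pos hk, if_pos hk, ker_np f u g hm hk, add_zero]
      · rw [if_neg hk, if_neg hk, ker_nn f u g hm hk, zero_add]
    rw [efun] at h
    convert h using 1
    ring

lemma inner_E_R_E (f u g : Linf) (k n : ℤ) :
    ⟪E k, Rop f u g f (E n)⟫ = ker f u g k n := by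
  have h := hasSum_R f u g (E n) k
  have h2 : HasSum (fun j => ker f u g k j * ⟪E j, E n⟫) (ker f u g k n) := by
    have h3 := hasSum_ite_eq n (ker f u g k n)
    convert h3 using 2 with j
    rw [inner_E_E]
    split_ifs with h4 <;> simp [h4]
  exact (h.unique h2)

lemma hasSum_RR (f₁ u₁ g₁ f₂ u₂ g₂ : Linf) (m n : ℤ) :
    HasSum (fun k => ker f₁ u₁ g₁ m k * ker f₂ u₂ g₂ k n)
      ⟪E m, (Rop f₁ u₁ g₁ f₁ ∘L Rop f₂ u₂ g₂ f₂) (E n)⟫ := by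
  have h := hasSum_R f₁ u₁ g₁ (Rop f₂ u₂ g₂ f₂ (E n)) m
  simp only [inner_E_R_E] at h
  exact h

lemma hasSum_shift {F G : ℤ → ℂ} {vF vG δ : ℂ} (hF : HasSum F vF) (hG : HasSum G vG)
    (hfun : ∀ k, F (k + 1) = G k + (if k = -1 then δ else 0)) : vF = vG + δ := by
  have h1 : HasSum (F ∘ (Equiv.addRight (1:ℤ))) vF := (Equiv.hasSum_iff _).mpr hF
  have h2 : HasSum (fun k => G k + (if k = -1 then δ else 0)) vF := by
    convert h1 using 1
    funext k
    rw [← hfun k]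
    rfl
  exact h2.unique (hG.add (hasSum_ite_eq (-1 : ℤ) δ))

lemma key (f₁ u₁ g₁ f₂ u₂ g₂ : Linf)
    (hcomm : Rop f₁ u₁ g₁ f₁ ∘L Rop f₂ u₂ g₂ f₂ = Rop f₂ u₂ g₂ f₂ ∘L Rop f₁ u₁ g₁ f₁)
    (m n : ℤ) (hm : m ≠ -1) (hn : n ≠ -1) :
    ker f₁ u₁ g₁ (m+1) 0 * ker f₂ u₂ g₂ 0 (n+1) - ker f₁ u₁ g₁ m (-1) * ker f₂ u₂ g₂ (-1) n
    = ker f₂ u₂ g₂ (m+1) 0 * ker f₁ u₁ g₁ 0 (n+1)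
      - ker f₂ u₂ g₂ m (-1) * ker f₁ u₁ g₁ (-1) n := by
  have h12 := hasSum_RR f₁ u₁ g₁ f₂ u₂ g₂ m n
  have h21 := hasSum_RR f₂ u₂ g₂ f₁ u₁ g₁ m n
  have h12' := hasSum_RR f₁ u₁ g₁ f₂ u₂ g₂ (m+1) (n+1)
  have h21' := hasSum_RR f₂ u₂ g₂ f₁ u₁ g₁ (m+1) (n+1)
  have q12 := hasSum_shift h12' h12 (G := fun k => ker f₁ u₁ g₁ m k * ker f₂ u₂ g₂ k n)
    (δ := ker f₁ u₁ g₁ (m+1) 0 * ker f₂ u₂ g₂ 0 (n+1) - ker f₁ u₁ g₁ m (-1) * ker f₂ u₂ g₂ (-1) n)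
    (fun k => by
      by_cases hk : k = -1
      · subst hk
        rw [if_pos rfl]
        norm_num
      · rw [if_neg hk, add_zero, ker_shift f₁ u₁ g₁ hm hk, ker_shift f₂ u₂ g₂ hk hn])
  have q21 := hasSum_shift h21' h21 (G := fun k => ker f₂ u₂ g₂ m k * ker f₁ u₁ g₁ k n)
    (δ := ker f₂ u₂ g₂ (m+1) 0 * ker f₁ u₁ g₁ 0 (n+1) - ker f₂ u₂ g₂ m (-1) * ker f₁ u₁ g₁ (-1) n)
    (fun k => by
      by_cases hk : k = -1
      · subst hk
        rw [if_pos rfl]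
        norm_num
      · rw [if_neg hk, add_zero, ker_shift f₂ u₂ g₂ hm hk, ker_shift f₁ u₁ g₁ hk hn])
  have c1 : ⟪E m, (Rop f₁ u₁ g₁ f₁ ∘L Rop f₂ u₂ g₂ f₂) (E n)⟫
      = ⟪E m, (Rop f₂ u₂ g₂ f₂ ∘L Rop f₁ u₁ g₁ f₁) (E n)⟫ := by rw [hcomm]
  have c2 : ⟪E (m+1), (Rop f₁ u₁ g₁ f₁ ∘L Rop f₂ u₂ g₂ f₂) (E (n+1))⟫
      = ⟪E (m+1), (Rop f₂ u₂ g₂ f₂ ∘L Rop f₁ u₁ g₁ f₁) (E (n+1))⟫ := by rw [hcomm]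
  rw [c2] at q12
  rw [← c1] at q21
  have h := q12.symm.trans q21
  linear_combination h
lemma keyE1 (f₁ u₁ g₁ f₂ u₂ g₂ : Linf)
    (hcomm : Rop f₁ u₁ g₁ f₁ ∘L Rop f₂ u₂ g₂ f₂ = Rop f₂ u₂ g₂ f₂ ∘L Rop f₁ u₁ g₁ f₁)
    {b a : ℤ} (hb : 1 ≤ b) (ha : a ≤ -1) :
    sc f₁ b * sc f₂ a - sc u₁ b * sc g₂ a = sc f₂ b * sc f₁ a - sc u₂ b * sc g₁ a := by
  have h := key f₁ u₁ g₁ f₂ u₂ g₂ hcomm (b - 1) (-a - 1) (by omega) (by omega)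
  rw [ker_pp f₁ u₁ g₁ (m := b - 1 + 1) (k := 0) (by omega) (by omega),
      ker_pp f₂ u₂ g₂ (m := 0) (k := -a - 1 + 1) (by omega) (by omega),
      ker_pn f₁ u₁ g₁ (m := b - 1) (k := -1) (by omega) (by omega),
      ker_np f₂ u₂ g₂ (m := -1) (k := -a - 1) (by omega) (by omega),
      ker_pp f₂ u₂ g₂ (m := b - 1 + 1) (k := 0) (by omega) (by omega),
      ker_pp f₁ u₁ g₁ (m := 0) (k := -a - 1 + 1) (by omega) (by omega),
      ker_pn f₂ u₂ g₂ (m := b - 1) (k := -1) (by omega) (by omega),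
      ker_np f₁ u₁ g₁ (m := -1) (k := -a - 1) (by omega) (by omega)] at h
  rw [show b - 1 + 1 - 0 = b from by ring, show (0:ℤ) - (-a - 1 + 1) = a from by ring,
      show b - 1 - -1 = b from by ring, show (-1:ℤ) - (-a - 1) = a from by ring] at h
  exact h

lemma keyE2 (f₁ u₁ g₁ f₂ u₂ g₂ : Linf)
    (hcomm : Rop f₁ u₁ g₁ f₁ ∘L Rop f₂ u₂ g₂ f₂ = Rop f₂ u₂ g₂ f₂ ∘L Rop f₁ u₁ g₁ f₁)
    {b c : ℤ} (hb : 1 ≤ b) (hc : 1 ≤ c) :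
    sc f₁ b * sc u₂ c - sc u₁ b * sc f₂ c = sc f₂ b * sc u₁ c - sc u₂ b * sc f₁ c := by
  have h := key f₁ u₁ g₁ f₂ u₂ g₂ hcomm (b - 1) (-c - 1) (by omega) (by omega)
  rw [ker_pp f₁ u₁ g₁ (m := b - 1 + 1) (k := 0) (by omega) (by omega),
      ker_pn f₂ u₂ g₂ (m := 0) (k := -c - 1 + 1) (by omega) (by omega),
      ker_pn f₁ u₁ g₁ (m := b - 1) (k := -1) (by omega) (by omega),
      ker_nn f₂ u₂ g₂ (m := -1) (k := -c - 1) (by omega) (by omega),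
      ker_pp f₂ u₂ g₂ (m := b - 1 + 1) (k := 0) (by omega) (by omega),
      ker_pn f₁ u₁ g₁ (m := 0) (k := -c - 1 + 1) (by omega) (by omega),
      ker_pn f₂ u₂ g₂ (m := b - 1) (k := -1) (by omega) (by omega),
      ker_nn f₁ u₁ g₁ (m := -1) (k := -c - 1) (by omega) (by omega)] at h
  rw [show b - 1 + 1 - 0 = b from by ring, show (0:ℤ) - (-c - 1 + 1) = c from by ring,
      show b - 1 - -1 = b from by ring, show (-1:ℤ) - (-c - 1) = c from by ring] at h
  exact h

lemma keyE3 (f₁ u₁ g₁ f₂ u₂ g₂ : Linf)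
    (hcomm : Rop f₁ u₁ g₁ f₁ ∘L Rop f₂ u₂ g₂ f₂ = Rop f₂ u₂ g₂ f₂ ∘L Rop f₁ u₁ g₁ f₁)
    {a' a : ℤ} (ha' : a' ≤ -1) (ha : a ≤ -1) :
    sc g₁ a' * sc f₂ a - sc f₁ a' * sc g₂ a = sc g₂ a' * sc f₁ a - sc f₂ a' * sc g₁ a := by
  have h := key f₁ u₁ g₁ f₂ u₂ g₂ hcomm (a' - 1) (-a - 1) (by omega) (by omega)
  rw [ker_np f₁ u₁ g₁ (m := a' - 1 + 1) (k := 0) (by omega) (by omega),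
      ker_pp f₂ u₂ g₂ (m := 0) (k := -a - 1 + 1) (by omega) (by omega),
      ker_nn f₁ u₁ g₁ (m := a' - 1) (k := -1) (by omega) (by omega),
      ker_np f₂ u₂ g₂ (m := -1) (k := -a - 1) (by omega) (by omega),
      ker_np f₂ u₂ g₂ (m := a' - 1 + 1) (k := 0) (by omega) (by omega),
      ker_pp f₁ u₁ g₁ (m := 0) (k := -a - 1 + 1) (by omega) (by omega),
      ker_nn f₂ u₂ g₂ (m := a' - 1) (k := -1) (by omega) (by omega),
      ker_np f₁ u₁ g₁ (m := -1) (k := -a - 1) (by omega) (by omega)] at h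
  rw [show a' - 1 + 1 - 0 = a' from by ring, show (0:ℤ) - (-a - 1 + 1) = a from by ring,
      show a' - 1 - -1 = a' from by ring, show (-1:ℤ) - (-a - 1) = a from by ring] at h
  exact h
lemma inner_E_Vmap (k : ℤ) (x : L2) : ⟪E k, Vmap x⟫ = conj ⟪E (-1 - k), x⟫ := by
  rw [inner_E, inner_E, fourierCoeff_congr_ae (coeFn_Vmap x)]
  have h1 : fourierCoeff (fun t => fourier (-1) t * conj ((x : Circ → ℂ) t)) k
      = fourierCoeff (fun t => conj ((x : Circ → ℂ) t)) (k + 1) := by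
    unfold fourierCoeff
    apply integral_congr_ae
    apply Filter.Eventually.of_forall
    intro t
    simp only [smul_eq_mul]
    rw [show -(k+1) = -k + -1 from by ring, fourier_add]
    ring
  rw [h1, fourierCoeff_conj, show -(k+1) = -1 - k from by ring]

lemma inner_E_mI (k : ℤ) (ψ : Linf) : ⟪E k, mI ψ⟫ = if k < 0 then sc ψ k else 0 := by
  rw [mI, inner_E_Pm]
  congr 1
  rw [inner_E, fourierCoeff_congr_ae (coeFn_toL2 ψ)]
  rfl

lemma inner_E_VmI (k : ℤ) (ψ : Linf) :
    ⟪E k, Vmap (mI ψ)⟫ = if 0 ≤ k then conj (sc ψ (-1 - k)) else 0 := by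
  rw [inner_E_Vmap, inner_E_mI]
  split_ifs with h1 h2 h2 <;> first | rfl | (exfalso; omega) | simp

lemma inner_E_mI_conj (k : ℤ) (ψ : Linf) :
    ⟪E k, mI (conjInf ψ)⟫ = if k < 0 then conj (sc ψ (-k)) else 0 := by
  rw [inner_E_mI, sc_conjInf]

lemma inner_E_VmI_conj (k : ℤ) (ψ : Linf) :
    ⟪E k, Vmap (mI (conjInf ψ))⟫ = if 0 ≤ k then sc ψ (k + 1) else 0 := by
  rw [inner_E_VmI, sc_conjInf, Complex.conj_conj, show -(-1 - k) = k + 1 from by ring]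

lemma dense_E : Dense ((Submodule.span ℂ (Set.range (fun n : ℤ => E n)) : Submodule ℂ L2)
    : Set L2) := by
  rw [Submodule.dense_iff_topologicalClosure_eq_top]
  exact (fourierBasis (T := 2 * Real.pi)).dense_span

lemma vec_ext {w : L2} (h : ∀ n, ⟪E n, w⟫ = 0) : w = 0 := by
  have hall : ∀ v ∈ Submodule.span ℂ (Set.range (fun n : ℤ => E n)), ⟪v, w⟫ = 0 := by
    intro v hv
    induction hv using Submodule.span_induction with
    | mem x hx => obtain ⟨n, rfl⟩ := hx; exact h n
    | zero => simp
    | add x y _ _ hx hy => rw [inner_add_left, hx, hy, add_zero]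
    | smul c x _ hx => rw [inner_smul_left, hx, mul_zero]
  exact dense_E.eq_zero_of_inner_right (𝕜 := ℂ) (fun v hv => hall v hv)

lemma vec_ext' {w w' : L2} (h : ∀ n, ⟪E n, w⟫ = ⟪E n, w'⟫) : w = w' := by
  have h0 : w - w' = 0 := vec_ext (fun n => by rw [inner_sub_right, h n, sub_self])
  exact sub_eq_zero.mp h0

lemma op_ext {S T : L2 →L[ℂ] L2} (h : ∀ n, S (E n) = T (E n)) : S = T := by
  apply ContinuousLinearMap.ext_on dense_E
  rintro x ⟨n, rfl⟩
  exact h n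

lemma rankOne_apply {H : Type*} [NormedAddCommGroup H] [InnerProductSpace ℂ H] (p q x : H) :
    rankOne p q x = ⟪q, x⟫ • p := rfl

lemma inner_rev (a : L2) (k : ℤ) : ⟪a, E k⟫ = conj ⟪E k, a⟫ := by
  rw [inner_conj_symm]
lemma Z22 (f₁ u₁ g₁ f₂ u₂ g₂ : Linf)
    (hcomm : Rop f₁ u₁ g₁ f₁ ∘L Rop f₂ u₂ g₂ f₂ = Rop f₂ u₂ g₂ f₂ ∘L Rop f₁ u₁ g₁ f₁) :
    rankOne (mI g₁) (mI (conjInf u₂)) - rankOne (mI f₁) (mI (conjInf f₂))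
    = rankOne (mI g₂) (mI (conjInf u₁)) - rankOne (mI f₂) (mI (conjInf f₁)) := by
  apply op_ext
  intro c
  simp only [ContinuousLinearMap.sub_apply, rankOne_apply]
  rw [inner_rev, inner_rev, inner_rev, inner_rev, inner_E_mI_conj, inner_E_mI_conj,
    inner_E_mI_conj, inner_E_mI_conj]
  by_cases hc : c < 0
  · rw [if_pos hc, if_pos hc, if_pos hc, if_pos hc]
    simp only [Complex.conj_conj]
    apply vec_ext'
    intro d
    simp only [inner_sub_right, inner_smul_right, inner_E_mI]
    by_cases hd : d < 0
    · rw [if_pos hd, if_pos hd, if_pos hd, if_pos hd]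
      have h := keyE1 f₁ u₁ g₁ f₂ u₂ g₂ hcomm (b := -c) (a := d) (by omega) (by omega)
      linear_combination h
    · rw [if_neg hd, if_neg hd, if_neg hd, if_neg hd]
      ring
  · rw [if_neg hc, if_neg hc, if_neg hc, if_neg hc]
    simp

lemma Z21 (f₁ u₁ g₁ f₂ u₂ g₂ : Linf)
    (hcomm : Rop f₁ u₁ g₁ f₁ ∘L Rop f₂ u₂ g₂ f₂ = Rop f₂ u₂ g₂ f₂ ∘L Rop f₁ u₁ g₁ f₁) :
    rankOne (mI g₁) (Vmap (mI f₂)) - rankOne (mI f₁) (Vmap (mI g₂))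
    = rankOne (mI g₂) (Vmap (mI f₁)) - rankOne (mI f₂) (Vmap (mI g₁)) := by
  apply op_ext
  intro c
  simp only [ContinuousLinearMap.sub_apply, rankOne_apply]
  rw [inner_rev, inner_rev, inner_rev, inner_rev, inner_E_VmI, inner_E_VmI,
    inner_E_VmI, inner_E_VmI]
  by_cases hc : 0 ≤ c
  · rw [if_pos hc, if_pos hc, if_pos hc, if_pos hc]
    simp only [Complex.conj_conj]
    apply vec_ext'
    intro d
    simp only [inner_sub_right, inner_smul_right, inner_E_mI]
    by_cases hd : d < 0
    · rw [if_pos hd, if_pos hd, if_pos hd, if_pos hd]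
      have h := keyE3 f₁ u₁ g₁ f₂ u₂ g₂ hcomm (a' := d) (a := -1 - c) (by omega) (by omega)
      linear_combination h
    · rw [if_neg hd, if_neg hd, if_neg hd, if_neg hd]
      ring
  · rw [if_neg hc, if_neg hc, if_neg hc, if_neg hc]
    simp

lemma Z12 (f₁ u₁ g₁ f₂ u₂ g₂ : Linf)
    (hcomm : Rop f₁ u₁ g₁ f₁ ∘L Rop f₂ u₂ g₂ f₂ = Rop f₂ u₂ g₂ f₂ ∘L Rop f₁ u₁ g₁ f₁) :
    rankOne (Vmap (mI (conjInf f₁))) (mI (conjInf u₂))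
      - rankOne (Vmap (mI (conjInf u₁))) (mI (conjInf f₂))
    = rankOne (Vmap (mI (conjInf f₂))) (mI (conjInf u₁))
      - rankOne (Vmap (mI (conjInf u₂))) (mI (conjInf f₁)) := by
  apply op_ext
  intro c
  simp only [ContinuousLinearMap.sub_apply, rankOne_apply]
  rw [inner_rev, inner_rev, inner_rev, inner_rev, inner_E_mI_conj, inner_E_mI_conj,
    inner_E_mI_conj, inner_E_mI_conj]
  by_cases hc : c < 0
  · rw [if_pos hc, if_pos hc, if_pos hc, if_pos hc]
    simp only [Complex.conj_conj]
    apply vec_ext'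
    intro d
    simp only [inner_sub_right, inner_smul_right, inner_E_VmI_conj]
    by_cases hd : 0 ≤ d
    · rw [if_pos hd, if_pos hd, if_pos hd, if_pos hd]
      have h := keyE2 f₁ u₁ g₁ f₂ u₂ g₂ hcomm (b := d + 1) (c := -c) (by omega) (by omega)
      linear_combination h
    · rw [if_neg hd, if_neg hd, if_neg hd, if_neg hd]
      ring
  · rw [if_neg hc, if_neg hc, if_neg hc, if_neg hc]
    simp

lemma Z11 (f₁ u₁ g₁ f₂ u₂ g₂ : Linf)
    (hcomm : Rop f₁ u₁ g₁ f₁ ∘L Rop f₂ u₂ g₂ f₂ = Rop f₂ u₂ g₂ f₂ ∘L Rop f₁ u₁ g₁ f₁) :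
    rankOne (Vmap (mI (conjInf f₁))) (Vmap (mI f₂))
      - rankOne (Vmap (mI (conjInf u₁))) (Vmap (mI g₂))
    = rankOne (Vmap (mI (conjInf f₂))) (Vmap (mI f₁))
      - rankOne (Vmap (mI (conjInf u₂))) (Vmap (mI g₁)) := by
  apply op_ext
  intro c
  simp only [ContinuousLinearMap.sub_apply, rankOne_apply]
  rw [inner_rev, inner_rev, inner_rev, inner_rev, inner_E_VmI, inner_E_VmI,
    inner_E_VmI, inner_E_VmI]
  by_cases hc : 0 ≤ c
  · rw [if_pos hc, if_pos hc, if_pos hc, if_pos hc]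
    simp only [Complex.conj_conj]
    apply vec_ext'
    intro d
    simp only [inner_sub_right, inner_smul_right, inner_E_VmI_conj]
    by_cases hd : 0 ≤ d
    · rw [if_pos hd, if_pos hd, if_pos hd, if_pos hd]
      have h := keyE1 f₁ u₁ g₁ f₂ u₂ g₂ hcomm (b := d + 1) (a := -1 - c) (by omega) (by omega)
      linear_combination h
    · rw [if_neg hd, if_neg hd, if_neg hd, if_neg hd]
      ring
  · rw [if_neg hc, if_neg hc, if_neg hc, if_neg hc]
    simp
lemma fourier_mul_fourier_neg_one (t : Circ) :
    fourier (-1) t * conj (fourier (T := 2 * Real.pi) (-1) t) = 1 := by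
  have h : conj (fourier (T := 2 * Real.pi) (-1) t) = fourier 1 t := by
    rw [← fourier_neg]
    norm_num
  rw [h, ← fourier_add]
  norm_num

lemma Vmap_Vmap (x : L2) : Vmap (Vmap x) = x := by
  apply MeasureTheory.Lp.ext
  filter_upwards [coeFn_Vmap (Vmap x), coeFn_Vmap x] with t h1 h2
  rw [h1, h2]
  simp only [map_mul, Complex.conj_conj]
  have := fourier_mul_fourier_neg_one t
  calc fourier (-1) t * ((starRingEnd ℂ) ((fourier (T := 2 * Real.pi)) (-1) t)
        * (x : Circ → ℂ) t) = (fourier (-1) t * (starRingEnd ℂ) ((fourier (T := 2 * Real.pi))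
        (-1) t)) * (x : Circ → ℂ) t := by ring
    _ = (x : Circ → ℂ) t := by rw [this, one_mul]

lemma Vmap_zero : Vmap (0 : L2) = 0 := by
  apply MeasureTheory.Lp.ext
  filter_upwards [coeFn_Vmap (0 : L2), MeasureTheory.Lp.coeFn_zero (E := ℂ) (p := 2) (μ := μC)]
    with t h1 h2
  rw [h1, h2]
  simp

lemma Vmap_smul (c : ℂ) (x : L2) : Vmap (c • x) = conj c • Vmap x := by
  apply MeasureTheory.Lp.ext
  filter_upwards [coeFn_Vmap (c • x), coeFn_Vmap x, MeasureTheory.Lp.coeFn_smul c x,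
    MeasureTheory.Lp.coeFn_smul (conj c) (Vmap x)] with t h1 h2 h3 h4
  rw [h1, h4, Pi.smul_apply, h2, h3, Pi.smul_apply]
  simp only [smul_eq_mul, map_mul]
  ring

lemma inner_Vmap_Vmap (a b : L2) : ⟪Vmap a, Vmap b⟫ = ⟪b, a⟫ := by
  rw [MeasureTheory.L2.inner_def, MeasureTheory.L2.inner_def]
  apply integral_congr_ae
  filter_upwards [coeFn_Vmap a, coeFn_Vmap b] with t h1 h2
  rw [h1, h2]
  simp only [RCLike.inner_apply, map_mul]
  have := fourier_mul_fourier_neg_one t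
  calc (fourier (-1)) t * (starRingEnd ℂ) ((b : Circ → ℂ) t)
        * ((starRingEnd ℂ) ((fourier (T := 2 * Real.pi)) (-1) t)
        * (starRingEnd ℂ) ((starRingEnd ℂ) ((a : Circ → ℂ) t)))
      = ((fourier (-1)) t * (starRingEnd ℂ) ((fourier (T := 2 * Real.pi)) (-1) t))
        * ((a : Circ → ℂ) t * (starRingEnd ℂ) ((b : Circ → ℂ) t)) := by
        simp only [Complex.conj_conj]; ring
    _ = (a : Circ → ℂ) t * (starRingEnd ℂ) ((b : Circ → ℂ) t) := by rw [this]; ring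

/-- The conjugation `D (x, y) = (V y, V x)` on `L² ⊕ L²`. -/
def Dmap (x : L2sq) : L2sq := pair (Vmap x.snd) (Vmap x.fst)

lemma pair_fst (a b : L2) : (pair a b).fst = a := rfl
lemma pair_snd (a b : L2) : (pair a b).snd = b := rfl

lemma Dmap_pair (a b : L2) : Dmap (pair a b) = pair (Vmap b) (Vmap a) := rfl

lemma Dmap_Dmap (x : L2sq) : Dmap (Dmap x) = x := by
  show pair (Vmap (Vmap x.fst)) (Vmap (Vmap x.snd)) = x
  rw [Vmap_Vmap, Vmap_Vmap]
  rfl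

lemma Dmap_smul (c : ℂ) (x : L2sq) : Dmap (c • x) = conj c • Dmap x := by
  show pair (Vmap (c • x.snd)) (Vmap (c • x.fst)) = conj c • pair (Vmap x.snd) (Vmap x.fst)
  rw [Vmap_smul, Vmap_smul]
  rfl

lemma Dmap_zero : Dmap (0 : L2sq) = 0 := by
  show pair (Vmap 0) (Vmap 0) = 0
  rw [Vmap_zero]
  rfl

lemma inner_Dmap_Dmap (x y : L2sq) : ⟪Dmap x, Dmap y⟫ = ⟪y, x⟫ := by
  rw [WithLp.prod_inner_apply, WithLp.prod_inner_apply]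
  show ⟪Vmap x.snd, Vmap y.snd⟫ + ⟪Vmap x.fst, Vmap y.fst⟫ = _
  rw [inner_Vmap_Vmap, inner_Vmap_Vmap, add_comm]
  rfl
/-- Inclusion of the first summand `L² → L² ⊕ L²`. -/
def inj1 : L2 →L[ℂ] L2sq :=
  (WithLp.prodContinuousLinearEquiv 2 ℂ L2 L2).symm.toContinuousLinearMap ∘L
    ContinuousLinearMap.inl ℂ L2 L2
/-- Inclusion of the second summand. -/
def inj2 : L2 →L[ℂ] L2sq :=
  (WithLp.prodContinuousLinearEquiv 2 ℂ L2 L2).symm.toContinuousLinearMap ∘L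
    ContinuousLinearMap.inr ℂ L2 L2
/-- Projection onto the first summand. -/
def proj1 : L2sq →L[ℂ] L2 :=
  ContinuousLinearMap.fst ℂ L2 L2 ∘L
    (WithLp.prodContinuousLinearEquiv 2 ℂ L2 L2).toContinuousLinearMap
/-- Projection onto the second summand. -/
def proj2 : L2sq →L[ℂ] L2 :=
  ContinuousLinearMap.snd ℂ L2 L2 ∘L
    (WithLp.prodContinuousLinearEquiv 2 ℂ L2 L2).toContinuousLinearMap

lemma inj1_apply (a : L2) : inj1 a = pair a 0 := rfl
lemma inj2_apply (a : L2) : inj2 a = pair 0 a := rfl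
lemma proj1_apply (x : L2sq) : proj1 x = x.fst := rfl
lemma proj2_apply (x : L2sq) : proj2 x = x.snd := rfl

lemma pair_eq (a b : L2) : pair a b = inj1 a + inj2 b := by
  rw [inj1_apply, inj2_apply]
  apply (WithLp.prodContinuousLinearEquiv 2 ℂ L2 L2).injective
  apply Prod.ext <;> simp [pair]

lemma inner_pair (a b : L2) (x : L2sq) : ⟪pair a b, x⟫ = ⟪a, x.fst⟫ + ⟪b, x.snd⟫ := by
  rw [WithLp.prod_inner_apply]
  rfl

lemma inner_pair' (a b : L2) (x : L2sq) : ⟪x, pair a b⟫ = ⟪x.fst, a⟫ + ⟪x.snd, b⟫ := by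
  rw [WithLp.prod_inner_apply]
  rfl

lemma Wexpand (A1 B1 C1 D1 A2 B2 C2 D2 : L2) :
    (rankOne (pair A1 B1) (pair C1 D1) - rankOne (pair A2 B2) (pair C2 D2) : L2sq →L[ℂ] L2sq)
    = inj1 ∘L (rankOne A1 C1 - rankOne A2 C2) ∘L proj1
      + inj1 ∘L (rankOne A1 D1 - rankOne A2 D2) ∘L proj2
      + inj2 ∘L (rankOne B1 C1 - rankOne B2 C2) ∘L proj1
      + inj2 ∘L (rankOne B1 D1 - rankOne B2 D2) ∘L proj2 := by
  ext x
  apply ext_inner_left ℂ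
  intro z
  simp only [ContinuousLinearMap.sub_apply, ContinuousLinearMap.add_apply,
    ContinuousLinearMap.comp_apply, rankOne_apply, proj1_apply, proj2_apply,
    inner_sub_right, inner_add_right, inner_smul_right, inner_pair,
    map_sub, _root_.map_smul, smul_eq_mul]
  have e1 : ∀ a : L2, ⟪z, inj1 a⟫ = ⟪z.fst, a⟫ := by
    intro a
    rw [inj1_apply, WithLp.prod_inner_apply]
    show ⟪z.fst, a⟫ + ⟪z.snd, (0 : L2)⟫ = _
    rw [inner_zero_right, add_zero]
  have e2 : ∀ a : L2, ⟪z, inj2 a⟫ = ⟪z.snd, a⟫ := by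
    intro a
    rw [inj2_apply, WithLp.prod_inner_apply]
    show ⟪z.fst, (0 : L2)⟫ + ⟪z.snd, a⟫ = _
    rw [inner_zero_right, zero_add]
  simp only [e1, e2, inner_pair', inner_smul_right]
  ring

lemma W_eq_W' (f₁ u₁ g₁ f₂ u₂ g₂ : Linf)
    (hcomm : Rop f₁ u₁ g₁ f₁ ∘L Rop f₂ u₂ g₂ f₂ = Rop f₂ u₂ g₂ f₂ ∘L Rop f₁ u₁ g₁ f₁) :
    (rankOne (pair (Vmap (mI (conjInf f₁))) (mI g₁)) (pair (Vmap (mI f₂)) (mI (conjInf u₂)))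
      - rankOne (pair (Vmap (mI (conjInf u₁))) (mI f₁)) (pair (Vmap (mI g₂)) (mI (conjInf f₂)))
      : L2sq →L[ℂ] L2sq)
    = rankOne (pair (Vmap (mI (conjInf f₂))) (mI g₂)) (pair (Vmap (mI f₁)) (mI (conjInf u₁)))
      - rankOne (pair (Vmap (mI (conjInf u₂))) (mI f₂)) (pair (Vmap (mI g₁)) (mI (conjInf f₁))) := by
  rw [Wexpand, Wexpand, Z11 f₁ u₁ g₁ f₂ u₂ g₂ hcomm, Z12 f₁ u₁ g₁ f₂ u₂ g₂ hcomm,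
    Z21 f₁ u₁ g₁ f₂ u₂ g₂ hcomm, Z22 f₁ u₁ g₁ f₂ u₂ g₂ hcomm]
lemma flip_eq {p q c1 d1 c2 d2 : L2sq}
    (h : (rankOne p q : L2sq →L[ℂ] L2sq) = rankOne c1 d1 - rankOne c2 d2) :
    (rankOne q p : L2sq →L[ℂ] L2sq) = rankOne d1 c1 - rankOne d2 c2 := by
  have key : ∀ (a b x z : L2sq), ⟪z, (rankOne a b : L2sq →L[ℂ] L2sq) x⟫
      = conj ⟪x, (rankOne b a : L2sq →L[ℂ] L2sq) z⟫ := by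
    intro a b x z
    rw [rankOne_apply, rankOne_apply, inner_smul_right, inner_smul_right, map_mul,
      inner_conj_symm, inner_conj_symm]
    ring
  ext x
  apply ext_inner_left ℂ
  intro z
  rw [key q p x z, h]
  simp only [ContinuousLinearMap.sub_apply, inner_sub_right, map_sub, key d1 c1 x z,
    key d2 c2 x z]

lemma dconj_eq {p q c1 d1 c2 d2 : L2sq}
    (h : (rankOne p q : L2sq →L[ℂ] L2sq) = rankOne c1 d1 - rankOne c2 d2) :
    (rankOne (Dmap p) (Dmap q) : L2sq →L[ℂ] L2sq)
      = rankOne (Dmap c1) (Dmap d1) - rankOne (Dmap c2) (Dmap d2) := by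
  have key : ∀ (a b y w : L2sq), ⟪w, (rankOne (Dmap a) (Dmap b) : L2sq →L[ℂ] L2sq) y⟫
      = conj ⟪Dmap w, (rankOne a b : L2sq →L[ℂ] L2sq) (Dmap y)⟫ := by
    intro a b y w
    rw [rankOne_apply, rankOne_apply, inner_smul_right, inner_smul_right, map_mul]
    have e1 : ⟪Dmap b, y⟫ = ⟪Dmap y, b⟫ := by
      conv_lhs => rw [show y = Dmap (Dmap y) from (Dmap_Dmap y).symm]
      exact inner_Dmap_Dmap _ _
    have e2 : ⟪w, Dmap a⟫ = ⟪a, Dmap w⟫ := by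
      conv_lhs => rw [show w = Dmap (Dmap w) from (Dmap_Dmap w).symm]
      exact inner_Dmap_Dmap _ _
    rw [e1, e2, inner_conj_symm, inner_conj_symm]
  ext y
  apply ext_inner_left ℂ
  intro w
  rw [key p q y w, h]
  simp only [ContinuousLinearMap.sub_apply, inner_sub_right, map_sub, key c1 d1 y w,
    key c2 d2 y w]
/-- If `R_{H₁}` and `R_{H₂}` commute and `f₁ = v₁`, `f₂ = v₂`, then the
operator `W` on `L² ⊕ L²` below cannot have rank one. -/
theorem statement8 (f₁ u₁ g₁ v₁ f₂ u₂ g₂ v₂ : Linf)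
    (hcomm : Rop f₁ u₁ g₁ v₁ ∘L Rop f₂ u₂ g₂ v₂ = Rop f₂ u₂ g₂ v₂ ∘L Rop f₁ u₁ g₁ v₁)
    (hf₁ : f₁ = v₁) (hf₂ : f₂ = v₂) :
    LinearMap.rank
        ((rankOne (pair (Vmap (mI (conjInf f₁))) (mI g₁))
              (pair (Vmap (mI f₂)) (mI (conjInf u₂))) -
            rankOne (pair (Vmap (mI (conjInf u₁))) (mI f₁))
              (pair (Vmap (mI g₂)) (mI (conjInf f₂))) : L2sq →L[ℂ] L2sq) :
          L2sq →ₗ[ℂ] L2sq) ≠ 1 := by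
  subst hf₁
  subst hf₂
  intro hrank
  set P1 : L2sq := pair (Vmap (mI (conjInf f₁))) (mI g₁) with hP1
  set Q1 : L2sq := pair (Vmap (mI f₂)) (mI (conjInf u₂)) with hQ1
  set P2 : L2sq := pair (Vmap (mI (conjInf u₁))) (mI f₁) with hP2
  set Q2 : L2sq := pair (Vmap (mI g₂)) (mI (conjInf f₂)) with hQ2
  set Wop : L2sq →L[ℂ] L2sq := rankOne P1 Q1 - rankOne P2 Q2 with hWop
  -- the commutation symmetry
  have hW' : Wop
      = rankOne (pair (Vmap (mI (conjInf f₂))) (mI g₂)) (pair (Vmap (mI f₁)) (mI (conjInf u₁)))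
      - rankOne (pair (Vmap (mI (conjInf u₂))) (mI f₂)) (pair (Vmap (mI g₁)) (mI (conjInf f₁))) :=
    W_eq_W' f₁ u₁ g₁ f₂ u₂ g₂ hcomm
  have hD1 : Dmap Q2 = pair (Vmap (mI (conjInf f₂))) (mI g₂) := by
    rw [hQ2, Dmap_pair, Vmap_Vmap]
  have hD2 : Dmap P2 = pair (Vmap (mI f₁)) (mI (conjInf u₁)) := by
    rw [hP2, Dmap_pair, Vmap_Vmap]
  have hD3 : Dmap Q1 = pair (Vmap (mI (conjInf u₂))) (mI f₂) := by
    rw [hQ1, Dmap_pair, Vmap_Vmap]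
  have hD4 : Dmap P1 = pair (Vmap (mI g₁)) (mI (conjInf f₁)) := by
    rw [hP1, Dmap_pair, Vmap_Vmap]
  rw [← hD1, ← hD2, ← hD3, ← hD4] at hW'
  -- rank-one structure
  haveI : Module.Free ℂ ↥(LinearMap.range ((Wop : L2sq →L[ℂ] L2sq) : L2sq →ₗ[ℂ] L2sq)) :=
    Module.Free.of_divisionRing ℂ _
  obtain ⟨v₀, hv0, hv⟩ := rank_eq_one_iff.mp hrank
  set p : L2sq := (v₀ : L2sq) with hpdef
  have hp : p ≠ 0 := by
    intro h
    rw [hpdef] at h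
    exact hv0 (ZeroMemClass.coe_eq_zero.mp h)
  have hrange : ∀ x : L2sq, ∃ r : ℂ, Wop x = r • p := by
    intro x
    obtain ⟨r, hr⟩ := hv ⟨Wop x, LinearMap.mem_range.mpr ⟨x, rfl⟩⟩
    refine ⟨r, ?_⟩
    have h := congrArg Subtype.val hr
    simpa using h.symm
  set nn : ℂ := ⟪p, p⟫ with hnn_def
  have hnn_conj : conj nn = nn := inner_conj_symm p p
  have hnn : nn ≠ 0 := fun h => hp (inner_self_eq_zero.mp h)
  set q : L2sq := nn⁻¹ • (⟪P1, p⟫ • Q1 - ⟪P2, p⟫ • Q2) with hqdef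
  have hqx : ∀ x : L2sq, ⟪q, x⟫ = nn⁻¹ * ⟪p, Wop x⟫ := by
    intro x
    rw [hqdef, hWop]
    simp only [inner_smul_left, inner_sub_left, inner_smul_left, ContinuousLinearMap.sub_apply,
      rankOne_apply, inner_sub_right, inner_smul_right, inner_conj_symm, map_inv₀, hnn_conj]
    ring
  have HQ : ∀ x : L2sq, Wop x = ⟪q, x⟫ • p := by
    intro x
    obtain ⟨r, hr⟩ := hrange x
    have : ⟪q, x⟫ = r := by
      rw [hqx x, hr, inner_smul_right, ← hnn_def, mul_comm r nn, ← mul_assoc,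
        inv_mul_cancel₀ hnn, one_mul]
    rw [this, hr]
  have hWq : Wop = rankOne p q := by
    ext x
    rw [rankOne_apply, HQ x]
  have hq0 : q ≠ 0 := by
    intro h
    obtain ⟨x, hx⟩ := v₀.2
    have hx' : Wop x = p := hx
    rw [HQ x, h, inner_zero_left, zero_smul] at hx'
    exact hp hx'.symm
  -- the symmetry argument
  have hMain : (rankOne p q : L2sq →L[ℂ] L2sq)
      = rankOne (Dmap Q2) (Dmap P2) - rankOne (Dmap Q1) (Dmap P1) := hWq.symm.trans hW'
  have hFlip := flip_eq hMain
  have hConj := dconj_eq hFlip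
  rw [Dmap_Dmap, Dmap_Dmap, Dmap_Dmap, Dmap_Dmap] at hConj
  have hNeg : (rankOne (Dmap q) (Dmap p) : L2sq →L[ℂ] L2sq) = - rankOne p q := by
    rw [hConj, ← hWq, hWop, neg_sub]
  -- evaluate at `Dmap p`
  have hDp : Dmap p ≠ 0 := fun h => hp (by rw [← Dmap_Dmap p, h, Dmap_zero])
  have h1 : ⟪Dmap p, Dmap p⟫ • Dmap q = -(⟪q, Dmap p⟫ • p) := by
    have h := ContinuousLinearMap.ext_iff.mp hNeg (Dmap p)
    rw [rankOne_apply, ContinuousLinearMap.neg_apply, rankOne_apply] at h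
    exact h
  rw [inner_Dmap_Dmap, ← hnn_def] at h1
  set lam : ℂ := -(nn⁻¹ * ⟪q, Dmap p⟫) with hlam
  have hDq : Dmap q = lam • p := by
    calc Dmap q = nn⁻¹ • (nn • Dmap q) := (inv_smul_smul₀ hnn _).symm
      _ = nn⁻¹ • (-(⟪q, Dmap p⟫ • p)) := by rw [h1]
      _ = lam • p := by rw [smul_neg, smul_smul, hlam, neg_smul]
  have hlam0 : lam ≠ 0 := by
    intro h
    apply hq0
    have hz : Dmap q = 0 := by rw [hDq, h, zero_smul]
    rw [← Dmap_Dmap q, hz, Dmap_zero]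
  have hqval : q = conj lam • Dmap p := by
    rw [← Dmap_Dmap q, hDq, Dmap_smul]
  have hinner : ⟪q, Dmap p⟫ = lam * nn := by
    rw [hqval, inner_smul_left, Complex.conj_conj, inner_Dmap_Dmap, ← hnn_def]
  have hfin : (nn * lam + lam * nn) • p = 0 := by
    have h3 : (nn * lam) • p = -((lam * nn) • p) := by
      rw [← smul_smul, ← hDq, ← hinner]
      exact h1
    rw [add_smul, h3, neg_add_cancel]
  have hscal : nn * lam + lam * nn = 0 := by
    rcases smul_eq_zero.mp hfin with h | h
    · exact h
    · exact absurd h hp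
  have hnl : nn * lam = 0 := by linear_combination hscal / 2
  rcases mul_eq_zero.mp hnl with h | h
  · exact hnn h
  · exact hlam0 h

end GSIO
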